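/- Ellipsoid inclusion from the LMI condition: Let P ∈ ℝ^{n×n} be symmetric positive definite, G ∈ ℝ^{m×n}, ū ∈ ℝ^m with ū_(i) > 0, and μ > 0. If for each i = 1,…,m the (n+1)×(n+1) block matrix [P, G_(i)ᵀ; G_(i), μ ū_(i)²] is positive semidefinite, then the ellipsoid ε(P,μ) = { x ∈ ℝ^n : xᵀPx ≤ μ⁻¹ } is contained in the polyhedral set 𝓛(ū) = { x ∈ ℝ^n : |G_(i) x| ≤ ū_(i), i = 1,…,m }. -/

import Mathlib

open Matrix

/-- ellipsoid inclusion from the LMI condition. -/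
theorem stmt12 {n m : ℕ} (P : Matrix (Fin n) (Fin n) ℝ) (hPsym : P.IsSymm) (hP : P.PosDef)
    (G : Matrix (Fin m) (Fin n) ℝ) (ub : Fin m → ℝ) (hub : ∀ i, 0 < ub i)
    (μ : ℝ) (hμ : 0 < μ)
    (h : ∀ i : Fin m,
      (Matrix.fromBlocks P (Matrix.of fun j (_ : Fin 1) => G i j)
        (Matrix.of fun (_ : Fin 1) j => G i j)
        (Matrix.of fun _ _ => μ * ub i ^ 2)).PosSemidef) :
    {x : Fin n → ℝ | x ⬝ᵥ (P *ᵥ x) ≤ μ⁻¹} ⊆ {x : Fin n → ℝ | ∀ i, |(G *ᵥ x) i| ≤ ub i} := by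
  intro x hx i
  simp only [Set.mem_setOf_eq] at hx ⊢
  set a : ℝ := x ⬝ᵥ (P *ᵥ x) with ha
  have ha0 : 0 ≤ a := by simpa using hP.posSemidef.dotProduct_mulVec_nonneg x
  set b : ℝ := (G *ᵥ x) i with hb
  have hbd : b = (fun j => G i j) ⬝ᵥ x := by
    simp [hb, Matrix.mulVec, dotProduct]
  -- quadratic nonnegativity
  have key : ∀ t : ℝ, 0 ≤ (μ * ub i ^ 2) * (t * t) + (2 * b) * t + a := by
    intro t
    have := (h i).dotProduct_mulVec_nonneg (Sum.elim x (fun _ => t))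
    rw [Matrix.fromBlocks_mulVec] at this
    simp only [star_trivial, sumElim_dotProduct_sumElim, dotProduct_add,
      Sum.elim_comp_inl, Sum.elim_comp_inr] at this
    have e1 : x ⬝ᵥ ((Matrix.of fun j (_ : Fin 1) => G i j) *ᵥ fun _ => t) = t * b := by
      simp only [Matrix.mulVec, dotProduct, Matrix.of_apply, hbd, Fin.sum_univ_one]
      rw [Finset.mul_sum]
      exact Finset.sum_congr rfl fun j _ => by ring
    have e2 : (fun _ : Fin 1 => t) ⬝ᵥ ((Matrix.of fun (_ : Fin 1) j => G i j) *ᵥ x) = t * b := by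
      simp [Matrix.mulVec, dotProduct, hbd]
    have e3 : (fun _ : Fin 1 => t) ⬝ᵥ ((Matrix.of fun (_ : Fin 1) (_ : Fin 1) => μ * ub i ^ 2) *ᵥ fun _ => t) = (μ * ub i ^ 2) * t ^ 2 := by
      simp [Matrix.mulVec, dotProduct]; ring
    rw [e1, e2, e3, ← ha] at this
    nlinarith [this]
  have hdisc : discrim (μ * ub i ^ 2) (2 * b) a ≤ 0 := discrim_le_zero key
  rw [discrim] at hdisc
  have hub2 : 0 < μ * ub i ^ 2 := mul_pos hμ (pow_pos (hub i) 2)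
  have hb2 : b ^ 2 ≤ ub i ^ 2 := by
    have h1 : b ^ 2 ≤ (μ * ub i ^ 2) * a := by nlinarith
    have h2 : (μ * ub i ^ 2) * a ≤ (μ * ub i ^ 2) * μ⁻¹ := by
      exact mul_le_mul_of_nonneg_left hx (le_of_lt hub2)
    have h3 : (μ * ub i ^ 2) * μ⁻¹ = ub i ^ 2 := by
      field_simp
    linarith
  exact abs_le.mpr (abs_le_of_sq_le_sq' hb2 (hub i).le)
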